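/- Let S be a minimum toll set of the lexicographic product G ∘ H, where G and H are non-trivial and H is not complete. Then for every vertex g of G, the number of vertices of S in the layer {g} × V(H) belongs to {0, 1, 2, tn(H)}. -/

import Mathlib

open SimpleGraph

/-- A walk `W` between `u` and `v` is a *tolled walk* if either `u = v` and `W` is trivial,
or `u` and `v` are adjacent and `W` is the single-edge walk, or `u ≠ v` are non-adjacent,
`W` has at least one interior vertex, `u` is adjacent exactly to the interior vertex
at position 1 and `v` exactly to the interior vertex at position `W.length - 1`. -/
def IsTolledWalk {V : Type*} (G : SimpleGraph V) {u v : V} (W : G.Walk u v) : Prop :=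
  (u = v ∧ W.length = 0) ∨
  (G.Adj u v ∧ W.support = [u, v]) ∨
  (¬ G.Adj u v ∧ u ≠ v ∧ 2 ≤ W.length ∧
    (∀ i, 0 < i → i < W.length → (G.Adj u (W.support.getD i u) ↔ i = 1)) ∧
    (∀ i, 0 < i → i < W.length → (G.Adj v (W.support.getD i u) ↔ i = W.length - 1)))

/-- The toll interval between `u` and `v`: vertices lying on some tolled walk. -/
def tollInterval {V : Type*} (G : SimpleGraph V) (u v : V) : Set V :=
  {x | ∃ W : G.Walk u v, IsTolledWalk G W ∧ x ∈ W.support}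

/-- A toll set: the toll intervals between its pairs cover the vertex set. -/
def IsTollSet {V : Type*} (G : SimpleGraph V) (S : Set V) : Prop :=
  ∀ x : V, ∃ u ∈ S, ∃ v ∈ S, x ∈ tollInterval G u v

/-- The toll number: minimum size of a toll set. -/
noncomputable def tollNumber {V : Type*} (G : SimpleGraph V) : ℕ :=
  sInf {n | ∃ S : Set V, S.Finite ∧ S.ncard = n ∧ IsTollSet G S}

/-- `v` is a cut vertex if deleting it disconnects the graph. -/
def IsCutVertex {V : Type*} (G : SimpleGraph V) (v : V) : Prop :=
  ¬ (G.induce {w | w ≠ v}).Preconnected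

/-- The extreme vertices of `G` with respect to toll convexity. -/
def extremeVertices {V : Type*} (G : SimpleGraph V) : Set V :=
  {s | ∀ x y : V, x ≠ s → y ≠ s → s ∉ tollInterval G x y}

/-- The lexicographic product of simple graphs. -/
def lexProd {V W : Type*} (G : SimpleGraph V) (H : SimpleGraph W) : SimpleGraph (V × W) where
  Adj a b := G.Adj a.1 b.1 ∨ (a.1 = b.1 ∧ H.Adj a.2 b.2)
  symm := by
    constructor
    rintro a b (h | ⟨h1, h2⟩)
    · exact Or.inl h.symm
    · exact Or.inr ⟨h1.symm, h2.symm⟩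
  loopless := by
    constructor
    rintro a (h | ⟨_, h⟩)
    · exact G.loopless.irrefl _ h
    · exact H.loopless.irrefl _ h

section Infra
variable {V : Type*} {G : SimpleGraph V}

lemma support_getD_eq_getVert {u v : V} (W : G.Walk u v) {i : ℕ} (hi : i ≤ W.length) (d : V) :
    W.support.getD i d = W.getVert i := by
  induction W generalizing i with
  | nil =>
    simp only [Walk.length_nil, Nat.le_zero] at hi
    subst hi; simp [Walk.support_nil]
  | cons h p ih =>
    cases i with
    | zero => simp [Walk.support_cons]
    | succ i =>
      simp only [Walk.length_cons, Nat.succ_le_succ_iff] at hi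
      simp only [Walk.support_cons, List.getD_cons_succ, Walk.getVert_cons_succ]
      exact ih hi

lemma exists_walk_of_fn (f : ℕ → V) (n : ℕ) (hadj : ∀ i < n, G.Adj (f i) (f (i+1))) :
    ∃ Wk : G.Walk (f 0) (f n), Wk.length = n ∧ ∀ k, k ≤ n → Wk.getVert k = f k := by
  induction n generalizing f with
  | zero => exact ⟨.nil, rfl, by rintro k hk; interval_cases k; simp⟩
  | succ n ih =>
    obtain ⟨Wk, hlen, hget⟩ := ih (fun i => f (i+1)) (fun i hi => hadj (i+1) (by omega))
    refine ⟨.cons (hadj 0 (by omega)) Wk, by simp [hlen], ?_⟩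
    rintro (_|k) hk
    · simp
    · simpa [Walk.getVert_cons_succ] using hget k (by omega)


lemma exists_walk_of_fn' {u v : V} (f : ℕ → V) (n : ℕ)
    (hadj : ∀ i < n, G.Adj (f i) (f (i+1))) (h0 : f 0 = u) (hn : f n = v) :
    ∃ Wk : G.Walk u v, Wk.length = n ∧ ∀ k, k ≤ n → Wk.getVert k = f k := by
  subst h0; subst hn; exact exists_walk_of_fn f n hadj

/-- `IsTolledWalk` restated via `getVert`. -/
lemma isTolledWalk_iff {u v : V} (W : G.Walk u v) :
    IsTolledWalk G W ↔
      (u = v ∧ W.length = 0) ∨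
      (G.Adj u v ∧ W.support = [u, v]) ∨
      (¬ G.Adj u v ∧ u ≠ v ∧ 2 ≤ W.length ∧
        (∀ i, 0 < i → i < W.length → (G.Adj u (W.getVert i) ↔ i = 1)) ∧
        (∀ i, 0 < i → i < W.length → (G.Adj v (W.getVert i) ↔ i = W.length - 1))) := by
  unfold IsTolledWalk
  refine or_congr Iff.rfl (or_congr Iff.rfl ?_)
  refine and_congr Iff.rfl (and_congr Iff.rfl (and_congr Iff.rfl (and_congr ?_ ?_))) <;>
  · refine forall_congr' fun i => ?_
    refine imp_congr Iff.rfl (forall_congr' fun hi => ?_)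
    rw [support_getD_eq_getVert W (le_of_lt hi)]

/-- A tolled walk reversed is tolled. -/
lemma IsTolledWalk.reverse {u v : V} {W : G.Walk u v} (h : IsTolledWalk G W) :
    IsTolledWalk G W.reverse := by
  rw [isTolledWalk_iff] at h ⊢
  rcases h with ⟨h1, h2⟩ | ⟨h1, h2⟩ | ⟨h1, h2, h3, h4, h5⟩
  · exact Or.inl ⟨h1.symm, by simp [h2]⟩
  · refine Or.inr (Or.inl ⟨h1.symm, ?_⟩)
    rw [Walk.support_reverse, h2]; rfl
  · refine Or.inr (Or.inr ⟨fun hadj => h1 hadj.symm, Ne.symm h2, by simpa using h3, ?_, ?_⟩)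
    · intro i hi0 hilen
      rw [Walk.length_reverse] at hilen
      rw [Walk.getVert_reverse]
      have h := h5 (W.length - i) (by omega) (by omega)
      constructor
      · intro hadj; have := h.mp hadj; omega
      · intro hieq; exact h.mpr (by omega)
    · intro i hi0 hilen
      rw [Walk.length_reverse] at hilen
      rw [Walk.getVert_reverse, Walk.length_reverse]
      have h := h4 (W.length - i) (by omega) (by omega)
      constructor
      · intro hadj; have := h.mp hadj; omega
      · intro hieq; exact h.mpr (by omega)

lemma mem_tollInterval_symm {u v x : V} (h : x ∈ tollInterval G u v) :
    x ∈ tollInterval G v u := by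
  obtain ⟨Wk, hW, hx⟩ := h
  exact ⟨Wk.reverse, hW.reverse, by simpa [Walk.support_reverse] using hx⟩

/-- trivial walk: x ∈ tollInterval x x -/
lemma self_mem_tollInterval (x : V) : x ∈ tollInterval G x x :=
  ⟨.nil, Or.inl ⟨rfl, rfl⟩, by simp⟩

/-- If `u = v` or `u,v` adjacent, the toll interval is contained in `{u, v}`. -/
lemma tollInterval_subset_of_adj {u v x : V} (huv : u = v ∨ G.Adj u v)
    (hx : x ∈ tollInterval G u v) : x = u ∨ x = v := by
  obtain ⟨Wk, hW, hxm⟩ := hx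
  rcases hW with ⟨h1, h2⟩ | ⟨h1, h2⟩ | ⟨h1, h2, _⟩
  · subst h1
    rw [(Walk.length_eq_zero_iff.mp h2).eq_nil] at hxm
    simp at hxm; tauto
  · rw [h2] at hxm; simp at hxm; tauto
  · rcases huv with h | h
    · exact absurd h h2
    · exact absurd h h1

/-- Every toll set in a non-complete graph contains a non-adjacent pair of distinct
vertices. -/
lemma tollSet_nonadj {T : Set V} (hT : IsTollSet G T) (hG : G ≠ ⊤) :
    ∃ p ∈ T, ∃ q ∈ T, p ≠ q ∧ ¬ G.Adj p q := by
  by_contra hcon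
  push_neg at hcon
  apply hG
  ext a b
  simp only [SimpleGraph.top_adj]
  constructor
  · exact fun h => h.ne
  · intro hab
    obtain ⟨p, hp, q, hq, hx⟩ := hT a
    obtain ⟨p', hp', q', hq', hx'⟩ := hT b
    have hpq : p = q ∨ G.Adj p q := by
      by_cases h : p = q
      · exact Or.inl h
      · exact Or.inr (hcon p hp q hq h)
    have hpq' : p' = q' ∨ G.Adj p' q' := by
      by_cases h : p' = q'
      · exact Or.inl h
      · exact Or.inr (hcon p' hp' q' hq' h)
    have ha := tollInterval_subset_of_adj (huv := by tauto) hx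
    have hb := tollInterval_subset_of_adj (huv := by tauto) hx'
    have haT : a ∈ T := by rcases ha with rfl | rfl <;> assumption
    have hbT : b ∈ T := by rcases hb with rfl | rfl <;> assumption
    exact hcon a haT b hbT hab

end Infra
section LexLemmas
open scoped Classical
variable {α β : Type*} {G : SimpleGraph α} {H : SimpleGraph β}

lemma lexProd_adj {a b : α × β} :
    (lexProd G H).Adj a b ↔ G.Adj a.1 b.1 ∨ (a.1 = b.1 ∧ H.Adj a.2 b.2) := Iff.rfl

lemma lexProd_adj_same {g : α} {a b : β} :
    (lexProd G H).Adj (g, a) (g, b) ↔ H.Adj a b := by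
  simp [lexProd_adj]

lemma lexProd_adj_cross {g c : α} {a b : β} (hc : c ≠ g) :
    (lexProd G H).Adj (g, a) (c, b) ↔ G.Adj g c := by
  simp only [lexProd_adj]
  constructor
  · rintro (h | ⟨h1, h2⟩)
    · exact h
    · exact absurd h1.symm hc
  · exact Or.inl

/-- generic cross-layer adjacency: if `y.1 ≠ g` then any vertex of layer `g` is adjacent
to `y` iff `G.Adj g y.1`. -/
lemma lexProd_adj_cross' {g : α} {a : β} {y : α × β} (hc : y.1 ≠ g) :
    (lexProd G H).Adj (g, a) y ↔ G.Adj g y.1 := by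
  obtain ⟨c, b⟩ := y
  exact lexProd_adj_cross hc

/-- MIX: a tolled walk (main case) starting in layer `g` and ending outside never
returns to layer `g`. -/
lemma mix_out {g b' : α} {p : β} {q : β} (hb : b' ≠ g)
    {Wk : (lexProd G H).Walk (g, p) (b', q)}
    (hadj : ¬ (lexProd G H).Adj (g, p) (b', q))
    (h4 : ∀ i, 0 < i → i < Wk.length →
      ((lexProd G H).Adj (g, p) (Wk.getVert i) ↔ i = 1)) :
    ∀ i, 1 ≤ i → i ≤ Wk.length → (Wk.getVert i).1 ≠ g := by
  have hlen : ∀ j i, 1 ≤ i → i ≤ Wk.length → Wk.length - i = j → (Wk.getVert i).1 ≠ g := by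
    intro j
    induction j with
    | zero =>
      intro i hi1 hin hij
      have : i = Wk.length := by omega
      subst this
      rw [Wk.getVert_length]
      exact hb
    | succ j ih =>
      intro i hi1 hin hij hg
      have hilt : i < Wk.length := by omega
      have hout : (Wk.getVert (i+1)).1 ≠ g := ih (i+1) (by omega) (by omega) (by omega)
      have hadj1 := Wk.adj_getVert_succ hilt
      have hgv : Wk.getVert i = (g, (Wk.getVert i).2) := Prod.ext hg rfl
      rw [hgv] at hadj1
      have hGadj : G.Adj g (Wk.getVert (i+1)).1 := (lexProd_adj_cross' hout).mp hadj1
      have hAdjU : (lexProd G H).Adj (g, p) (Wk.getVert (i+1)) :=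
        (lexProd_adj_cross' hout).mpr hGadj
      by_cases hiend : i + 1 = Wk.length
      · rw [hiend, Wk.getVert_length] at hAdjU
        exact hadj hAdjU
      · have := (h4 (i+1) (by omega) (by omega)).mp hAdjU
        omega
  intro i hi1 hin
  exact hlen (Wk.length - i) i hi1 hin rfl

/-- IN: a tolled walk (main case) between two vertices of layer `g` either stays in the
layer or has length 2 with the middle vertex outside, in a `G`-neighboring layer. -/
lemma in_layer {g : α} {p q : β}
    {Wk : (lexProd G H).Walk (g, p) (g, q)}
    (h4 : ∀ i, 0 < i → i < Wk.length →
      ((lexProd G H).Adj (g, p) (Wk.getVert i) ↔ i = 1))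
    (h5 : ∀ i, 0 < i → i < Wk.length →
      ((lexProd G H).Adj (g, q) (Wk.getVert i) ↔ i = Wk.length - 1)) :
    (∀ i, i ≤ Wk.length → (Wk.getVert i).1 = g) ∨
    (Wk.length = 2 ∧ (Wk.getVert 1).1 ≠ g ∧ G.Adj g (Wk.getVert 1).1) := by
  by_cases hall : ∀ i, i ≤ Wk.length → (Wk.getVert i).1 = g
  · exact Or.inl hall
  · push_neg at hall
    have hex : ∃ i, i ≤ Wk.length ∧ (Wk.getVert i).1 ≠ g := by
      obtain ⟨i, h1, h2⟩ := hall; exact ⟨i, h1, h2⟩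
    set P : ℕ → Prop := fun i => i ≤ Wk.length ∧ (Wk.getVert i).1 ≠ g with hP
    have hfs := Nat.find_spec hex
    set i0 := Nat.find hex with hi0
    have hle : i0 ≤ Wk.length := hfs.1
    have hne : (Wk.getVert i0).1 ≠ g := hfs.2
    have h0 : i0 ≠ 0 := by
      intro h; rw [h] at hne; rw [Wk.getVert_zero] at hne; exact hne rfl
    have hnlen : i0 ≠ Wk.length := by
      intro h; rw [h, Wk.getVert_length] at hne; exact hne rfl
    have hprev : (Wk.getVert (i0 - 1)).1 = g := by
      by_contra hcon
      have := Nat.find_min hex (m := i0 - 1) (by omega)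
      exact this ⟨by omega, hcon⟩
    have hadj1 := Wk.adj_getVert_succ (i := i0 - 1) (by omega)
    have heq : i0 - 1 + 1 = i0 := by omega
    rw [heq] at hadj1
    have hgv : Wk.getVert (i0-1) = (g, (Wk.getVert (i0-1)).2) := Prod.ext hprev rfl
    rw [hgv] at hadj1
    have hGadj : G.Adj g (Wk.getVert i0).1 := (lexProd_adj_cross' hne).mp hadj1
    have hu := (h4 i0 (by omega) (by omega)).mp ((lexProd_adj_cross' hne).mpr hGadj)
    have hv := (h5 i0 (by omega) (by omega)).mp ((lexProd_adj_cross' hne).mpr hGadj)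
    have hL2 : Wk.length = 2 := by omega
    refine Or.inr ⟨hL2, ?_, ?_⟩
    · rw [← hu]; exact hne
    · rw [← hu]; exact hGadj

end LexLemmas
section LexLemmas2
open scoped Classical
variable {α β : Type*} {G : SimpleGraph α} {H : SimpleGraph β}

/-- Lifting tolled walks of `H` into a layer. -/
lemma lift_layer {g : α} {p q h : β} (hh : h ∈ tollInterval H p q) :
    ((g, h) : α × β) ∈ tollInterval (lexProd G H) (g, p) (g, q) := by
  obtain ⟨Wk, hW, hx⟩ := hh
  rw [isTolledWalk_iff] at hW
  rcases hW with ⟨rfl, hlen0⟩ | ⟨hadj, hsupp⟩ | ⟨h1, h2, h3, h4, h5⟩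
  · rw [(Walk.length_eq_zero_iff.mp hlen0).eq_nil] at hx
    simp only [Walk.support_nil, List.mem_singleton] at hx
    subst hx
    exact self_mem_tollInterval _
  · rw [hsupp] at hx
    simp only [List.mem_cons, List.mem_singleton, List.not_mem_nil, or_false] at hx
    have hL : (lexProd G H).Adj (g, p) (g, q) := lexProd_adj_same.mpr hadj
    refine ⟨Walk.cons hL Walk.nil, Or.inr (Or.inl ⟨hL, by simp⟩), ?_⟩
    rcases hx with rfl | rfl <;> simp
  · rw [Walk.mem_support_iff_exists_getVert] at hx
    obtain ⟨i, hgv, hile⟩ := hx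
    obtain ⟨Wk', hlen, hget⟩ := exists_walk_of_fn' (u := ((g,p) : α × β)) (v := ((g,q) : α × β))
      (fun j => (g, Wk.getVert j)) Wk.length
      (fun j hj => lexProd_adj_same.mpr (Wk.adj_getVert_succ hj)) (by simp) (by simp)
    refine ⟨Wk', ?_, ?_⟩
    · rw [isTolledWalk_iff]
      refine Or.inr (Or.inr ⟨fun hc => h1 (lexProd_adj_same.mp hc),
        fun hc => h2 (congrArg Prod.snd hc), by omega, ?_, ?_⟩)
      · intro m hm0 hmlen
        rw [hlen] at hmlen
        rw [hget m (by omega), lexProd_adj_same]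
        exact h4 m hm0 hmlen
      · intro m hm0 hmlen
        rw [hlen] at hmlen
        rw [hget m (by omega), lexProd_adj_same, hlen]
        exact h5 m hm0 hmlen
    · rw [Walk.mem_support_iff_exists_getVert]
      exact ⟨i, by rw [hget i (by omega), hgv], by omega⟩

end LexLemmas2
section LexLemmas3
open scoped Classical
variable {α β : Type*} {G : SimpleGraph α} {H : SimpleGraph β}

/-- Projection: a layer vertex in a toll interval of two layer vertices projects into the
corresponding toll interval of `H` (or is one of the endpoints). -/
lemma proj_layer {g : α} {p q h : β}
    (hx : ((g, h) : α × β) ∈ tollInterval (lexProd G H) (g, p) (g, q)) :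
    h ∈ tollInterval H p q ∨ h = p ∨ h = q := by
  obtain ⟨Wk, hW, hxm⟩ := hx
  rw [isTolledWalk_iff] at hW
  rcases hW with ⟨heq, hlen0⟩ | ⟨hadj, hsupp⟩ | ⟨h1, h2, h3, h4, h5⟩
  · have hpq : p = q := congrArg Prod.snd heq
    subst hpq
    rw [(Walk.length_eq_zero_iff.mp hlen0).eq_nil] at hxm
    simp only [Walk.support_nil, List.mem_singleton, Prod.mk.injEq] at hxm
    exact Or.inr (Or.inl hxm.2)
  · rw [hsupp] at hxm
    simp only [List.mem_cons, List.mem_singleton, List.not_mem_nil, or_false,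
      Prod.mk.injEq] at hxm
    rcases hxm with ⟨_, rfl⟩ | ⟨_, rfl⟩
    · exact Or.inr (Or.inl rfl)
    · exact Or.inr (Or.inr rfl)
  · rw [Walk.mem_support_iff_exists_getVert] at hxm
    obtain ⟨i, hgv, hile⟩ := hxm
    rcases in_layer h4 h5 with hall | ⟨hL2, hout, hGadj⟩
    · -- the walk stays in the layer: project it to H
      left
      obtain ⟨Wk', hlen, hget⟩ := exists_walk_of_fn' (u := p) (v := q)
        (fun j => (Wk.getVert j).2) Wk.length
        (fun j hj => by
          have hadj1 := Wk.adj_getVert_succ hj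
          have e1 : Wk.getVert j = (g, (Wk.getVert j).2) := Prod.ext (hall j (by omega)) rfl
          have e2 : Wk.getVert (j+1) = (g, (Wk.getVert (j+1)).2) :=
            Prod.ext (hall (j+1) (by omega)) rfl
          rw [e1, e2] at hadj1
          exact lexProd_adj_same.mp hadj1)
        (by simp) (by simp)
      refine ⟨Wk', ?_, ?_⟩
      · rw [isTolledWalk_iff]
        refine Or.inr (Or.inr ⟨fun hc => h1 (lexProd_adj_same.mpr hc),
          fun hc => h2 (by rw [hc]), by omega, ?_, ?_⟩)
        · intro m hm0 hmlen
          rw [hlen] at hmlen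
          rw [hget m (by omega)]
          have e : Wk.getVert m = (g, (Wk.getVert m).2) := Prod.ext (hall m (by omega)) rfl
          rw [← lexProd_adj_same (G := G), ← e]
          exact h4 m hm0 hmlen
        · intro m hm0 hmlen
          rw [hlen] at hmlen
          rw [hget m (by omega), hlen]
          have e : Wk.getVert m = (g, (Wk.getVert m).2) := Prod.ext (hall m (by omega)) rfl
          rw [← lexProd_adj_same (G := G), ← e]
          exact h5 m hm0 hmlen
      · rw [Walk.mem_support_iff_exists_getVert]
        exact ⟨i, by rw [hget i (by omega), hgv], by omega⟩
    · -- length-2 walk through a neighboring layer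
      rcases Nat.lt_or_ge i 1 with hi | hi
      · have : i = 0 := by omega
        subst this
        rw [Wk.getVert_zero] at hgv
        exact Or.inr (Or.inl (congrArg Prod.snd hgv).symm)
      · rcases Nat.lt_or_ge i 2 with hi2 | hi2
        · have : i = 1 := by omega
          subst this
          rw [hgv] at hout
          exact absurd rfl hout
        · have : i = Wk.length := by omega
          subst this
          rw [Wk.getVert_length] at hgv
          exact Or.inr (Or.inr (congrArg Prod.snd hgv).symm)

/-- A layer vertex on a tolled walk from the layer to the outside must be the start. -/
lemma mix_layer_eq {g b' : α} {p q : β} {x : α × β} (hb : b' ≠ g)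
    (hx : x ∈ tollInterval (lexProd G H) (g, p) (b', q)) (hxg : x.1 = g) :
    x = (g, p) := by
  obtain ⟨Wk, hW, hxm⟩ := hx
  rw [isTolledWalk_iff] at hW
  rcases hW with ⟨heq, _⟩ | ⟨_, hsupp⟩ | ⟨h1, h2, h3, h4, h5⟩
  · exact absurd (congrArg Prod.fst heq).symm hb
  · rw [hsupp] at hxm
    simp only [List.mem_cons, List.mem_singleton, List.not_mem_nil, or_false] at hxm
    rcases hxm with rfl | rfl
    · rfl
    · exact absurd hxg hb
  · rw [Walk.mem_support_iff_exists_getVert] at hxm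
    obtain ⟨i, hgv, hile⟩ := hxm
    rcases Nat.eq_zero_or_pos i with rfl | hi
    · rw [Wk.getVert_zero] at hgv; exact hgv.symm
    · have := mix_out hb h1 h4 i hi hile
      rw [hgv] at this
      exact absurd hxg this

/-- Replacement of both endpoints for a within-layer pair covering an outside vertex. -/
lemma replace_pair {g : α} {p q p' q' : β} {x : α × β}
    (hx : x ∈ tollInterval (lexProd G H) (g, p) (g, q)) (hxg : x.1 ≠ g)
    (hne : p' ≠ q') (hnadj : ¬ H.Adj p' q') :
    x ∈ tollInterval (lexProd G H) (g, p') (g, q') := by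
  obtain ⟨Wk, hW, hxm⟩ := hx
  rw [isTolledWalk_iff] at hW
  rcases hW with ⟨heq, hlen0⟩ | ⟨_, hsupp⟩ | ⟨h1, h2, h3, h4, h5⟩
  · rw [Walk.mem_support_iff_exists_getVert] at hxm
    obtain ⟨i, hgv, hile⟩ := hxm
    have : i = 0 := by omega
    subst this
    rw [Wk.getVert_zero] at hgv
    rw [← hgv] at hxg
    exact absurd rfl hxg
  · rw [hsupp] at hxm
    simp only [List.mem_cons, List.mem_singleton, List.not_mem_nil, or_false] at hxm
    rcases hxm with rfl | rfl <;> simp at hxg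
  · rw [Walk.mem_support_iff_exists_getVert] at hxm
    obtain ⟨i, hgv, hile⟩ := hxm
    rcases in_layer h4 h5 with hall | ⟨hL2, hout, hGadj⟩
    · rw [← hgv] at hxg
      exact absurd (hall i hile) hxg
    · have hieq : i = 1 := by
        rcases Nat.eq_zero_or_pos i with rfl | hi1
        · rw [Wk.getVert_zero] at hgv; rw [← hgv] at hxg; exact absurd rfl hxg
        · rcases Nat.lt_or_ge i 2 with h' | h'
          · omega
          · have : i = Wk.length := by omega
            subst this
            rw [Wk.getVert_length] at hgv
            rw [← hgv] at hxg
            exact absurd rfl hxg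
      subst hieq
      subst hgv
      set y := Wk.getVert 1 with hy
      have hnadjL : ¬ (lexProd G H).Adj (g, p') (g, q') := by
        rw [lexProd_adj_same]; exact hnadj
      obtain ⟨Wk', hlen, hget⟩ := exists_walk_of_fn' (u := ((g,p') : α × β))
        (v := ((g,q') : α × β))
        (fun j => if j = 0 then (g, p') else if j = 1 then y else (g, q')) 2
        (fun j hj => by
          interval_cases j
          · simpa using (lexProd_adj_cross' (G := G) (H := H) (a := p') hout).mpr hGadj
          · simpa using ((lexProd_adj_cross' (G := G) (H := H) (a := q') hout).mpr hGadj).symm)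
        (by simp) (by simp)
      refine ⟨Wk', ?_, ?_⟩
      · rw [isTolledWalk_iff]
        refine Or.inr (Or.inr ⟨hnadjL, fun hc => hne (congrArg Prod.snd hc), by omega, ?_, ?_⟩)
        · intro m hm0 hmlen
          rw [hlen] at hmlen
          have : m = 1 := by omega
          subst this
          rw [hget 1 (by omega)]
          simp only [if_neg (by omega : ¬ (1:ℕ) = 0), if_pos rfl]
          exact iff_of_true ((lexProd_adj_cross' (a := p') hout).mpr hGadj) (by norm_num)
        · intro m hm0 hmlen
          rw [hlen] at hmlen
          have : m = 1 := by omega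
          subst this
          rw [hget 1 (by omega), hlen]
          simp only [if_neg (by omega : ¬ (1:ℕ) = 0), if_pos rfl]
          exact iff_of_true ((lexProd_adj_cross' (a := q') hout).mpr hGadj) (by norm_num)
      · rw [Walk.mem_support_iff_exists_getVert]
        exact ⟨1, by simpa using hget 1 (by omega), by omega⟩

/-- Replacement of the in-layer endpoint for a mixed pair covering an outside vertex. -/
lemma replace_start {g b' : α} {p q : β} {x : α × β} (hb : b' ≠ g)
    (hx : x ∈ tollInterval (lexProd G H) (g, p) (b', q)) (hxg : x.1 ≠ g)
    (hxv : x ≠ (b', q)) (p' : β) :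
    x ∈ tollInterval (lexProd G H) (g, p') (b', q) := by
  obtain ⟨Wk, hW, hxm⟩ := hx
  rw [isTolledWalk_iff] at hW
  rcases hW with ⟨heq, _⟩ | ⟨_, hsupp⟩ | ⟨h1, h2, h3, h4, h5⟩
  · exact absurd (congrArg Prod.fst heq).symm hb
  · rw [hsupp] at hxm
    simp only [List.mem_cons, List.mem_singleton, List.not_mem_nil, or_false] at hxm
    rcases hxm with rfl | rfl
    · exact absurd rfl hxg
    · exact absurd rfl hxv
  · rw [Walk.mem_support_iff_exists_getVert] at hxm
    obtain ⟨i, hgv, hile⟩ := hxm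
    have hmix := mix_out hb h1 h4
    have hnadjL : ¬ (lexProd G H).Adj (g, p') (b', q) := by
      rw [lexProd_adj_cross hb]
      intro hc
      exact h1 ((lexProd_adj_cross hb).mpr hc)
    have hgv1 : (Wk.getVert 1).1 ≠ g := hmix 1 le_rfl (by omega)
    have hadj1 : G.Adj g (Wk.getVert 1).1 := by
      have := (h4 1 (by omega) (by omega)).mpr rfl
      exact (lexProd_adj_cross' hgv1).mp this
    obtain ⟨Wk', hlen, hget⟩ := exists_walk_of_fn' (u := ((g,p') : α × β)) (v := ((b',q) : α × β))
      (fun j => if j = 0 then (g, p') else Wk.getVert j) Wk.length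
      (fun j hj => by
        rcases Nat.eq_zero_or_pos j with rfl | hj1
        · simpa using (lexProd_adj_cross' (G := G) (H := H) (a := p') hgv1).mpr hadj1
        · simp only [if_neg (by omega : ¬ j = 0), if_neg (by omega : ¬ j + 1 = 0)]
          exact Wk.adj_getVert_succ hj)
      (by simp)
      (by show (if Wk.length = 0 then ((g,p') : α × β) else Wk.getVert Wk.length) = (b', q)
          rw [if_neg (by omega : ¬ Wk.length = 0)]; exact Wk.getVert_length)
    refine ⟨Wk', ?_, ?_⟩
    · rw [isTolledWalk_iff]
      refine Or.inr (Or.inr ⟨hnadjL, fun hc => hb (congrArg Prod.fst hc).symm, by omega, ?_, ?_⟩)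
      · intro m hm0 hmlen
        rw [hlen] at hmlen
        rw [hget m (by omega), if_neg (by omega : ¬ m = 0)]
        have hmout : (Wk.getVert m).1 ≠ g := hmix m (by omega) (by omega)
        rw [lexProd_adj_cross' (a := p') hmout, ← lexProd_adj_cross' (a := p) hmout]
        exact h4 m hm0 hmlen
      · intro m hm0 hmlen
        rw [hlen] at hmlen
        rw [hget m (by omega), if_neg (by omega : ¬ m = 0), hlen]
        exact h5 m hm0 hmlen
    · rw [Walk.mem_support_iff_exists_getVert]
      have hi0 : i ≠ 0 := by
        intro hc; subst hc; rw [Wk.getVert_zero] at hgv; rw [← hgv] at hxg; exact absurd rfl hxg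
      refine ⟨i, ?_, by omega⟩
      rw [hget i (by omega), if_neg hi0]
      exact hgv

end LexLemmas3
section LexLemmas4
open scoped Classical
variable {α β : Type*} {G : SimpleGraph α} {H : SimpleGraph β}

/-- adjacency of an out-of-layer vertex to a layer vertex. -/
lemma lexProd_adj_cross'' {g : α} {a : β} {y : α × β} (hc : y.1 ≠ g) :
    (lexProd G H).Adj y (g, a) ↔ G.Adj g y.1 := by
  rw [SimpleGraph.adj_comm]; exact lexProd_adj_cross' hc

/-- M1: if a toll interval between two vertices outside layer `g` contains one vertex of
the layer, it contains the whole layer. -/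
lemma layer_cover {g : α} {u v : α × β} (hu : u.1 ≠ g) (hv : v.1 ≠ g) {h : β}
    (hx : ((g, h) : α × β) ∈ tollInterval (lexProd G H) u v) (h' : β) :
    ((g, h') : α × β) ∈ tollInterval (lexProd G H) u v := by
  obtain ⟨Wk, hW, hxm⟩ := hx
  rw [isTolledWalk_iff] at hW
  rcases hW with ⟨heq, hlen0⟩ | ⟨_, hsupp⟩ | ⟨h1, h2, h3, h4, h5⟩
  · rw [Walk.mem_support_iff_exists_getVert] at hxm
    obtain ⟨i, hgv, hile⟩ := hxm
    have : i = 0 := by omega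
    subst this
    rw [Wk.getVert_zero] at hgv
    exact absurd (by rw [hgv]) hu
  · rw [hsupp] at hxm
    simp only [List.mem_cons, List.mem_singleton, List.not_mem_nil, or_false] at hxm
    rcases hxm with heq | heq
    · rw [← heq] at hu; exact absurd rfl hu
    · rw [← heq] at hv; exact absurd rfl hv
  · rw [Walk.mem_support_iff_exists_getVert] at hxm
    obtain ⟨i, hgv, hile⟩ := hxm
    set n := Wk.length with hn
    have hlayi : (Wk.getVert i).1 = g := by rw [hgv]
    have hi1 : 1 ≤ i := by
      rcases Nat.eq_zero_or_pos i with rfl | h'' ; · rw [Wk.getVert_zero] at hlayi; exact absurd hlayi hu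
      · exact h''
    have hin : i < n := by
      rcases Nat.lt_or_ge i n with h'' | h''; · exact h''
      · have : i = n := by omega
        rw [this, Wk.getVert_length] at hlayi; exact absurd hlayi hv
    set P : ℕ → Prop := fun j => (Wk.getVert j).1 ≠ g with hPdef
    have hP0 : P 0 := by rw [hPdef]; simpa [Wk.getVert_zero] using hu
    have hPi : ¬ P i := by rw [hPdef]; simpa using hlayi
    set l0 := Nat.findGreatest P i with hl0def
    have hl0P : P l0 := Nat.findGreatest_spec (Nat.zero_le i) hP0
    have hl0le : l0 ≤ i := Nat.findGreatest_le i
    have hl0lt : l0 < i := lt_of_le_of_ne hl0le (fun hEq => hPi (hEq ▸ hl0P))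
    have hmid1 : ∀ j, l0 < j → j ≤ i → (Wk.getVert j).1 = g := by
      intro j hj1 hj2
      by_contra hc
      exact Nat.findGreatest_is_greatest hj1 hj2 hc
    have hexr : ∃ j, i < j ∧ P j := by
      refine ⟨n, by omega, ?_⟩
      rw [hPdef]; simpa [hn, Wk.getVert_length] using hv
    set r0 := Nat.find hexr with hr0def
    have hr0spec := Nat.find_spec hexr
    have hir0 : i < r0 := hr0spec.1
    have hr0P : P r0 := hr0spec.2
    have hr0le : r0 ≤ n := Nat.find_le ⟨by omega, by rw [hPdef]; simpa [hn, Wk.getVert_length] using hv⟩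
    have hmid2 : ∀ j, i < j → j < r0 → (Wk.getVert j).1 = g := by
      intro j hj1 hj2
      by_contra hc
      exact Nat.find_min hexr hj2 ⟨hj1, hc⟩
    have hmid : ∀ j, l0 < j → j < r0 → (Wk.getVert j).1 = g := by
      intro j hj1 hj2
      rcases le_or_gt j i with h'' | h''
      · exact hmid1 j hj1 h''
      · exact hmid2 j h'' hj2
    have hr0l0 : l0 + 2 ≤ r0 := by omega
    set d := r0 - l0 - 2 with hddef
    set n' := n - r0 + l0 + 2 with hn'def
    have hdn : n' + d = n := by omega
    have hn'2 : 2 ≤ n' := by omega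
    have hn'l0 : l0 + 1 < n' := by omega
    set f : ℕ → α × β :=
      fun j => if j ≤ l0 then Wk.getVert j else if j = l0+1 then (g, h') else Wk.getVert (j + d)
      with hfdef
    -- layer facts at the two boundary positions
    have hlay1 : (Wk.getVert (l0+1)).1 = g := hmid (l0+1) (by omega) (by omega)
    have hlayr : (Wk.getVert (r0-1)).1 = g := hmid (r0-1) (by omega) (by omega)
    have hadjl : (lexProd G H).Adj (Wk.getVert l0) ((g, h') : α × β) := by
      have hedge := Wk.adj_getVert_succ (i := l0) (by omega)
      have e : Wk.getVert (l0+1) = (g, (Wk.getVert (l0+1)).2) := Prod.ext hlay1 rfl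
      rw [e] at hedge
      have := (lexProd_adj_cross' (a := (Wk.getVert (l0+1)).2) hl0P).mp hedge.symm
      exact ((lexProd_adj_cross' (a := h') hl0P).mpr this).symm
    have hadjr : (lexProd G H).Adj ((g, h') : α × β) (Wk.getVert r0) := by
      have hedge := Wk.adj_getVert_succ (i := r0 - 1) (by omega)
      rw [(by omega : r0 - 1 + 1 = r0)] at hedge
      have e : Wk.getVert (r0-1) = (g, (Wk.getVert (r0-1)).2) := Prod.ext hlayr rfl
      rw [e] at hedge
      have := (lexProd_adj_cross' (a := (Wk.getVert (r0-1)).2) hr0P).mp hedge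
      exact (lexProd_adj_cross' (a := h') hr0P).mpr this
    obtain ⟨Wk', hlen, hget⟩ := exists_walk_of_fn' (u := u) (v := v) f n'
      (fun j hj => by
        rcases Nat.lt_or_ge j l0 with hc | hc
        · simp only [hfdef, if_pos (by omega : j ≤ l0), if_pos (by omega : j + 1 ≤ l0)]
          exact Wk.adj_getVert_succ (by omega)
        rcases Nat.eq_or_lt_of_le hc with hc2 | hc2
        · -- j = l0
          simp only [hfdef, if_pos (by omega : j ≤ l0), if_neg (by omega : ¬ j + 1 ≤ l0),
            if_pos (by omega : j + 1 = l0 + 1)]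
          rw [← hc2]
          exact hadjl
        rcases Nat.eq_or_lt_of_le hc2 with hc3 | hc3
        · -- j = l0 + 1
          simp only [hfdef, if_neg (by omega : ¬ j ≤ l0), if_pos (by omega : j = l0 + 1),
            if_neg (by omega : ¬ j + 1 ≤ l0), if_neg (by omega : ¬ j + 1 = l0 + 1)]
          have : j + 1 + d = r0 := by omega
          rw [this]
          exact hadjr
        · simp only [hfdef, if_neg (by omega : ¬ j ≤ l0), if_neg (by omega : ¬ j = l0 + 1),
            if_neg (by omega : ¬ j + 1 ≤ l0), if_neg (by omega : ¬ j + 1 = l0 + 1)]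
          have : j + 1 + d = j + d + 1 := by omega
          rw [this]
          exact Wk.adj_getVert_succ (by omega))
      (by simp only [hfdef, if_pos (Nat.zero_le l0)]; exact Wk.getVert_zero)
      (by simp only [hfdef, if_neg (by omega : ¬ n' ≤ l0), if_neg (by omega : ¬ n' = l0 + 1)]
          rw [hdn]; exact Wk.getVert_length)
    refine ⟨Wk', ?_, ?_⟩
    · rw [isTolledWalk_iff]
      refine Or.inr (Or.inr ⟨h1, h2, by omega, ?_, ?_⟩)
      · intro m hm0 hmlen
        rw [hlen] at hmlen
        rw [hget m (by omega)]
        rcases le_or_gt m l0 with hc | hc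
        · rw [hfdef]; simp only [if_pos hc]
          exact h4 m hm0 (by omega)
        rcases Nat.eq_or_lt_of_le hc with hc2 | hc2
        · rw [hfdef]; simp only [if_neg (by omega : ¬ m ≤ l0), if_pos (by omega : m = l0 + 1)]
          have e : Wk.getVert (l0+1) = (g, (Wk.getVert (l0+1)).2) := Prod.ext hlay1 rfl
          have hiff := h4 (l0+1) (by omega) (by omega)
          rw [e] at hiff
          have huadj : (lexProd G H).Adj u ((g,h') : α × β) ↔
              (lexProd G H).Adj u ((g, (Wk.getVert (l0+1)).2) : α × β) := by
            rw [SimpleGraph.adj_comm, lexProd_adj_cross' (a := h') hu,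
              SimpleGraph.adj_comm (G := lexProd G H), lexProd_adj_cross' hu]
          rw [huadj, hiff]
          omega
        · rw [hfdef]; simp only [if_neg (by omega : ¬ m ≤ l0), if_neg (by omega : ¬ m = l0 + 1)]
          have hiff := h4 (m + d) (by omega) (by omega)
          rw [hiff]
          omega
      · intro m hm0 hmlen
        rw [hlen] at hmlen
        rw [hget m (by omega), hlen]
        rcases le_or_gt m l0 with hc | hc
        · rw [hfdef]; simp only [if_pos hc]
          have hiff := h5 m hm0 (by omega)
          rw [hiff]
          omega
        rcases Nat.eq_or_lt_of_le hc with hc2 | hc2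
        · rw [hfdef]; simp only [if_neg (by omega : ¬ m ≤ l0), if_pos (by omega : m = l0 + 1)]
          have e : Wk.getVert (r0-1) = (g, (Wk.getVert (r0-1)).2) := Prod.ext hlayr rfl
          have hiff := h5 (r0-1) (by omega) (by omega)
          rw [e] at hiff
          have hvadj : (lexProd G H).Adj v ((g,h') : α × β) ↔
              (lexProd G H).Adj v ((g, (Wk.getVert (r0-1)).2) : α × β) := by
            rw [SimpleGraph.adj_comm, lexProd_adj_cross' (a := h') hv,
              SimpleGraph.adj_comm (G := lexProd G H), lexProd_adj_cross' hv]
          rw [hvadj, hiff]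
          omega
        · rw [hfdef]; simp only [if_neg (by omega : ¬ m ≤ l0), if_neg (by omega : ¬ m = l0 + 1)]
          have hiff := h5 (m + d) (by omega) (by omega)
          rw [hiff]
          omega
    · rw [Walk.mem_support_iff_exists_getVert]
      refine ⟨l0 + 1, ?_, by omega⟩
      rw [hget (l0+1) (by omega), hfdef]
      simp only [if_neg (by omega : ¬ l0 + 1 ≤ l0), if_pos rfl]
      all_goals rfl

end LexLemmas4
section Assembly
open scoped Classical
variable {α β : Type*} {G : SimpleGraph α} {H : SimpleGraph β}

lemma replace_start' {g : α} {p : β} {v : α × β} {x : α × β} (hb : v.1 ≠ g)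
    (hx : x ∈ tollInterval (lexProd G H) (g, p) v) (hxg : x.1 ≠ g) (hxv : x ≠ v) (p' : β) :
    x ∈ tollInterval (lexProd G H) (g, p') v := by
  obtain ⟨b, q⟩ := v
  exact replace_start hb hx hxg hxv p'

lemma mix_layer_eq' {g : α} {p : β} {v : α × β} {x : α × β} (hb : v.1 ≠ g)
    (hx : x ∈ tollInterval (lexProd G H) (g, p) v) (hxg : x.1 = g) :
    x = (g, p) := by
  obtain ⟨b, q⟩ := v
  exact mix_layer_eq hb hx hxg

lemma exists_nonadj (hH : H ≠ ⊤) : ∃ w1 w2 : β, w1 ≠ w2 ∧ ¬ H.Adj w1 w2 := by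
  by_contra hc
  push_neg at hc
  apply hH
  ext a b
  simp only [SimpleGraph.top_adj]
  exact ⟨fun h => h.ne, fun h => hc a b h⟩

lemma isTollSet_univ {V' : Type*} {G' : SimpleGraph V'} : IsTollSet G' Set.univ :=
  fun x => ⟨x, trivial, x, trivial, self_mem_tollInterval x⟩

lemma tollNumber_le {V' : Type*} [Fintype V'] {G' : SimpleGraph V'} {T : Set V'}
    (hT : IsTollSet G' T) : tollNumber G' ≤ T.ncard :=
  Nat.sInf_le ⟨T, T.toFinite, rfl, hT⟩

lemma exists_min_tollSet {V' : Type*} [Fintype V'] (G' : SimpleGraph V') :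
    ∃ T : Set V', T.ncard = tollNumber G' ∧ IsTollSet G' T := by
  have hne : {n | ∃ S : Set V', S.Finite ∧ S.ncard = n ∧ IsTollSet G' S}.Nonempty :=
    ⟨(Set.univ : Set V').ncard, Set.univ, Set.toFinite _, rfl, isTollSet_univ⟩
  have := Nat.sInf_mem hne
  obtain ⟨T, _, h2, h3⟩ := this
  exact ⟨T, h2, h3⟩

/-- Recovery of coverage of a vertex outside layer `g` after replacing the layer part of
a toll set by a fixed non-adjacent pair inside the layer. -/
lemma recover_out {S : Set (α × β)} {g : α} {w1 w2 : β}
    (hne : w1 ≠ w2) (hnadj : ¬ H.Adj w1 w2) {T : Set (α × β)}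
    (hT1 : ∀ y ∈ S, y.1 ≠ g → y ∈ T)
    (hT2 : ((g, w1) : α × β) ∈ T) (hT3 : ((g, w2) : α × β) ∈ T)
    {x u v : α × β} (hu : u ∈ S) (hv : v ∈ S)
    (hx : x ∈ tollInterval (lexProd G H) u v) (hxg : x.1 ≠ g) :
    ∃ u' ∈ T, ∃ v' ∈ T, x ∈ tollInterval (lexProd G H) u' v' := by
  by_cases hug : u.1 = g <;> by_cases hvg : v.1 = g
  · have hu' : u = (g, u.2) := Prod.ext hug rfl
    have hv' : v = (g, v.2) := Prod.ext hvg rfl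
    rw [hu', hv'] at hx
    exact ⟨(g, w1), hT2, (g, w2), hT3, replace_pair hx hxg hne hnadj⟩
  · by_cases hxv : x = v
    · exact ⟨v, hT1 v hv hvg, v, hT1 v hv hvg, by rw [hxv]; exact self_mem_tollInterval v⟩
    · have hu' : u = (g, u.2) := Prod.ext hug rfl
      rw [hu'] at hx
      exact ⟨(g, w1), hT2, v, hT1 v hv hvg, replace_start' hvg hx hxg hxv w1⟩
  · have hx' := mem_tollInterval_symm hx
    by_cases hxu : x = u
    · exact ⟨u, hT1 u hu hug, u, hT1 u hu hug, by rw [hxu]; exact self_mem_tollInterval u⟩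
    · have hv' : v = (g, v.2) := Prod.ext hvg rfl
      rw [hv'] at hx'
      exact ⟨(g, w1), hT2, u, hT1 u hu hug, replace_start' hug hx' hxg hxu w1⟩
  · exact ⟨u, hT1 u hu hug, v, hT1 v hv hvg, hx⟩

end Assembly
theorem stmt18 {V W : Type*} [Fintype V] [Fintype W] [Nontrivial V] [Nontrivial W]
    (G : SimpleGraph V) (H : SimpleGraph W) (hH : H ≠ ⊤)
    (S : Set (V × W)) (hS : IsTollSet (lexProd G H) S)
    (hmin : S.ncard = tollNumber (lexProd G H)) :
    ∀ g : V, (S ∩ ({g} ×ˢ (Set.univ : Set W))).ncard ∈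
      ({0, 1, 2, tollNumber H} : Set ℕ) := by
  intro g
  classical
  set layer : Set (V × W) := {g} ×ˢ (Set.univ : Set W) with hlayer
  set A := S ∩ layer with hA
  have hmemlayer : ∀ y : V × W, y ∈ layer ↔ y.1 = g := by
    intro y; rw [hlayer, Set.mem_prod]; simp
  have hmemA : ∀ y : V × W, y ∈ A ↔ y ∈ S ∧ y.1 = g := by
    intro y; rw [hA, Set.mem_inter_iff, hmemlayer]
  have hfinS : S.Finite := Set.toFinite S
  have hkS : A.ncard ≤ S.ncard := Set.ncard_le_ncard Set.inter_subset_left hfinS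
  -- Part 1 : A.ncard ≤ tollNumber H
  obtain ⟨TH, hTHcard, hTHtoll⟩ := exists_min_tollSet H
  obtain ⟨ps, hps, qs, hqs, hpqne, hpqnadj⟩ := tollSet_nonadj hTHtoll hH
  set B := (fun h => ((g, h) : V × W)) '' TH with hB
  have hBmem : ∀ h ∈ TH, ((g, h) : V × W) ∈ B := fun h hh => ⟨h, hh, rfl⟩
  set S1 := (S \ A) ∪ B with hS1
  have hT1 : ∀ y ∈ S, y.1 ≠ g → y ∈ S1 := by
    intro y hy hyg
    exact Or.inl ⟨hy, fun hc => hyg ((hmemA y).mp hc).2⟩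
  have hS1toll : IsTollSet (lexProd G H) S1 := by
    intro x
    by_cases hxg : x.1 = g
    · obtain ⟨p, hp, q, hq, hh⟩ := hTHtoll x.2
      refine ⟨(g, p), Or.inr (hBmem p hp), (g, q), Or.inr (hBmem q hq), ?_⟩
      have hxe : x = (g, x.2) := Prod.ext hxg rfl
      rw [hxe]
      exact lift_layer hh
    · obtain ⟨u, hu, v, hv, hx⟩ := hS x
      exact recover_out hpqne hpqnadj hT1 (Or.inr (hBmem _ hps)) (Or.inr (hBmem _ hqs))
        hu hv hx hxg
  have hpart1 : A.ncard ≤ tollNumber H := by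
    have h1 : tollNumber (lexProd G H) ≤ S1.ncard := tollNumber_le hS1toll
    have h2 : S1.ncard ≤ (S \ A).ncard + B.ncard := Set.ncard_union_le _ _
    have h3 : B.ncard ≤ TH.ncard := Set.ncard_image_le TH.toFinite
    have h4 : (S \ A).ncard = S.ncard - A.ncard := Set.ncard_diff Set.inter_subset_left A.toFinite
    omega
  simp only [Set.mem_insert_iff, Set.mem_singleton_iff]
  by_cases hk : A.ncard ≤ 2
  · omega
  · right; right; right
    refine le_antisymm hpart1 ?_
    by_cases hQ : ∀ h : W, ∃ u ∈ S, ∃ v ∈ S,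
        ((g, h) : V × W) ∈ tollInterval (lexProd G H) u v ∧ (u.1 = g ∨ v.1 = g)
    · have hmemP : ∀ y : V × W, y ∈ S → y.1 = g → y.2 ∈ Prod.snd '' A :=
        fun y hy hyg => ⟨y, (hmemA y).mpr ⟨hy, hyg⟩, rfl⟩
      have hPtoll : IsTollSet H (Prod.snd '' A) := by
        intro h
        obtain ⟨u, hu, v, hv, hx, hor⟩ := hQ h
        by_cases hug : u.1 = g <;> by_cases hvg : v.1 = g
        · have hu' : u = (g, u.2) := Prod.ext hug rfl
          have hv' : v = (g, v.2) := Prod.ext hvg rfl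
          rw [hu', hv'] at hx
          rcases proj_layer hx with hI | hh | hh
          · exact ⟨u.2, hmemP u hu hug, v.2, hmemP v hv hvg, hI⟩
          · exact ⟨u.2, hmemP u hu hug, u.2, hmemP u hu hug,
              by rw [hh]; exact self_mem_tollInterval _⟩
          · exact ⟨v.2, hmemP v hv hvg, v.2, hmemP v hv hvg,
              by rw [hh]; exact self_mem_tollInterval _⟩
        · have hu' : u = (g, u.2) := Prod.ext hug rfl
          rw [hu'] at hx
          have heq := mix_layer_eq' hvg hx rfl
          have hh : h = u.2 := congrArg Prod.snd heq
          exact ⟨u.2, hmemP u hu hug, u.2, hmemP u hu hug,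
            by rw [hh]; exact self_mem_tollInterval _⟩
        · have hv' : v = (g, v.2) := Prod.ext hvg rfl
          have hx' := mem_tollInterval_symm hx
          rw [hv'] at hx'
          have heq := mix_layer_eq' hug hx' rfl
          have hh : h = v.2 := congrArg Prod.snd heq
          exact ⟨v.2, hmemP v hv hvg, v.2, hmemP v hv hvg,
            by rw [hh]; exact self_mem_tollInterval _⟩
        · rcases hor with hc | hc
          · exact absurd hc hug
          · exact absurd hc hvg
      calc tollNumber H ≤ (Prod.snd '' A).ncard := tollNumber_le hPtoll
        _ ≤ A.ncard := Set.ncard_image_le A.toFinite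
    · exfalso
      push_neg at hQ
      obtain ⟨h0, hOnly⟩ := hQ
      obtain ⟨u0, hu0, v0, hv0, hx0⟩ := hS (g, h0)
      obtain ⟨hu0g, hv0g⟩ := hOnly u0 hu0 v0 hv0 hx0
      obtain ⟨w1, w2, hwne, hwnadj⟩ := exists_nonadj hH
      set S2 := (S \ A) ∪ {((g, w1) : V × W), (g, w2)} with hS2
      have hT1' : ∀ y ∈ S, y.1 ≠ g → y ∈ S2 :=
        fun y hy hyg => Or.inl ⟨hy, fun hc => hyg ((hmemA y).mp hc).2⟩
      have hS2toll : IsTollSet (lexProd G H) S2 := by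
        intro x
        by_cases hxg : x.1 = g
        · refine ⟨u0, hT1' u0 hu0 hu0g, v0, hT1' v0 hv0 hv0g, ?_⟩
          have hxe : x = (g, x.2) := Prod.ext hxg rfl
          rw [hxe]
          exact layer_cover hu0g hv0g hx0 x.2
        · obtain ⟨u, hu, v, hv, hx⟩ := hS x
          exact recover_out hwne hwnadj hT1' (Or.inr (by simp)) (Or.inr (by simp))
            hu hv hx hxg
      have h1 : tollNumber (lexProd G H) ≤ S2.ncard := tollNumber_le hS2toll
      have h2 : S2.ncard ≤ (S \ A).ncard + ({((g, w1) : V × W), (g, w2)} : Set (V × W)).ncard :=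
        Set.ncard_union_le _ _
      have h3 : ({((g, w1) : V × W), (g, w2)} : Set (V × W)).ncard ≤ 2 := by
        have := Set.ncard_insert_le ((g, w1) : V × W) ({(g, w2)} : Set (V × W))
        simpa using this
      have h4 : (S \ A).ncard = S.ncard - A.ncard := Set.ncard_diff Set.inter_subset_left A.toFinite
      omega
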